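/- Let (H, M) be a Hilbert module. Then B₀(H,H) = B₀ˡ(H,H) ∩ B₀ʳ(H,H) is a C*-subalgebra of B(H), and an operator S ∈ B(H) belongs to B₀(H,H) if and only if there exist M, N ∈ M and T ∈ B(H) such that S = M∘T∘N. -/

import Mathlib

open ContinuousLinearMap

noncomputable section

variable {H K : Type*}

/-- `M` is the multiplier algebra of a Banach module structure on `H`: a non-degenerate
norm-closed subalgebra of `B(H)` possessing a bounded approximate unit. -/
structure IsBanachModule (H : Type*) [NormedAddCommGroup H] [NormedSpace ℂ H]
    (M : Set (H →L[ℂ] H)) : Prop where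
  zero_mem : (0 : H →L[ℂ] H) ∈ M
  add_mem : ∀ {A B : H →L[ℂ] H}, A ∈ M → B ∈ M → A + B ∈ M
  smul_mem : ∀ (c : ℂ) {A : H →L[ℂ] H}, A ∈ M → c • A ∈ M
  mul_mem : ∀ {A B : H →L[ℂ] H}, A ∈ M → B ∈ M → A.comp B ∈ M
  isClosed : IsClosed M
  nondegenerate : Dense (↑(Submodule.span ℂ {u : H | ∃ A ∈ M, ∃ v : H, u = A v}) : Set H)
  approx_unit : ∃ C : ℝ, ∀ ε > (0 : ℝ), ∀ F : Finset (H →L[ℂ] H), ↑F ⊆ M →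
    ∃ J ∈ M, ‖J‖ ≤ C ∧ ∀ A ∈ F, ‖J.comp A - A‖ ≤ ε ∧ ‖A.comp J - A‖ ≤ ε

/-- A Hilbert module: a Banach module on a Hilbert space whose multiplier algebra is a
C*-algebra of operators (i.e. is moreover closed under adjoints). -/
structure IsHilbertModule (H : Type*) [NormedAddCommGroup H] [InnerProductSpace ℂ H]
    [CompleteSpace H] (M : Set (H →L[ℂ] H)) extends IsBanachModule H M : Prop where
  star_mem : ∀ {A : H →L[ℂ] H}, A ∈ M → ContinuousLinearMap.adjoint A ∈ M

/-- `B₀ˡ(H,K)`: the closed linear span of the operators `A ∘ T` with `A` in the multiplier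
algebra of `K` and `T ∈ B(H,K)` (operators left vanishing at infinity). -/
def B0l [NormedAddCommGroup H] [NormedSpace ℂ H] [NormedAddCommGroup K] [NormedSpace ℂ K]
    (MK : Set (K →L[ℂ] K)) : Set (H →L[ℂ] K) :=
  closure (↑(Submodule.span ℂ
    {S : H →L[ℂ] K | ∃ A ∈ MK, ∃ T : H →L[ℂ] K, S = A.comp T}) : Set (H →L[ℂ] K))

/-- `B₀ʳ(H,K)`: the closed linear span of the operators `T ∘ A` with `A` in the multiplier
algebra of `H` and `T ∈ B(H,K)` (operators right vanishing at infinity). -/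
def B0r [NormedAddCommGroup H] [NormedSpace ℂ H] [NormedAddCommGroup K] [NormedSpace ℂ K]
    (MH : Set (H →L[ℂ] H)) : Set (H →L[ℂ] K) :=
  closure (↑(Submodule.span ℂ
    {S : H →L[ℂ] K | ∃ A ∈ MH, ∃ T : H →L[ℂ] K, S = T.comp A}) : Set (H →L[ℂ] K))

/-- `S ∈ B(H,K)` is left decay preserving. -/
def LeftDecayPreserving [NormedAddCommGroup H] [NormedSpace ℂ H] [NormedAddCommGroup K]
    [NormedSpace ℂ K] (MH : Set (H →L[ℂ] H)) (MK : Set (K →L[ℂ] K))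
    (S : H →L[ℂ] K) : Prop :=
  ∀ A ∈ MH, S.comp A ∈ B0l MK

/-- `S ∈ B(H,K)` is right decay preserving. -/
def RightDecayPreserving [NormedAddCommGroup H] [NormedSpace ℂ H] [NormedAddCommGroup K]
    [NormedSpace ℂ K] (MH : Set (H →L[ℂ] H)) (MK : Set (K →L[ℂ] K))
    (S : H →L[ℂ] K) : Prop :=
  ∀ A ∈ MK, A.comp S ∈ B0r MH


set_option maxHeartbeats 1000000
set_option synthInstance.maxHeartbeats 400000

namespace Stmt0Aux

variable {X : Type*} [NormedAddCommGroup X] [NormedSpace ℂ X] {M : Set (X →L[ℂ] X)} {C : ℝ}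

lemma mem_B0l_gen {A : X →L[ℂ] X} (hA : A ∈ M) (T : X →L[ℂ] X) : A.comp T ∈ B0l (H := X) M :=
  subset_closure (Submodule.subset_span ⟨A, hA, T, rfl⟩)

lemma mem_B0r_gen {A : X →L[ℂ] X} (hA : A ∈ M) (T : X →L[ℂ] X) : T.comp A ∈ B0r (K := X) M :=
  subset_closure (Submodule.subset_span ⟨A, hA, T, rfl⟩)

lemma B0l_eq : B0l (H := X) M = ↑((Submodule.span ℂ
    {S : X →L[ℂ] X | ∃ A ∈ M, ∃ T : X →L[ℂ] X, S = A.comp T}).topologicalClosure) :=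
  (Submodule.topologicalClosure_coe _).symm

lemma B0r_eq : B0r (K := X) M = ↑((Submodule.span ℂ
    {S : X →L[ℂ] X | ∃ A ∈ M, ∃ T : X →L[ℂ] X, S = T.comp A}).topologicalClosure) :=
  (Submodule.topologicalClosure_coe _).symm

lemma zero_mem_B0l : (0 : X →L[ℂ] X) ∈ B0l (H := X) M := by
  rw [B0l_eq]; exact Submodule.zero_mem _

lemma zero_mem_B0r : (0 : X →L[ℂ] X) ∈ B0r (K := X) M := by
  rw [B0r_eq]; exact Submodule.zero_mem _

lemma add_mem_B0l {x y : X →L[ℂ] X} (hx : x ∈ B0l (H := X) M) (hy : y ∈ B0l (H := X) M) :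
    x + y ∈ B0l (H := X) M := by
  rw [B0l_eq] at *; exact Submodule.add_mem _ hx hy

lemma add_mem_B0r {x y : X →L[ℂ] X} (hx : x ∈ B0r (K := X) M) (hy : y ∈ B0r (K := X) M) :
    x + y ∈ B0r (K := X) M := by
  rw [B0r_eq] at *; exact Submodule.add_mem _ hx hy

lemma smul_mem_B0l (c : ℂ) {x : X →L[ℂ] X} (hx : x ∈ B0l (H := X) M) :
    c • x ∈ B0l (H := X) M := by
  rw [B0l_eq] at *; exact Submodule.smul_mem _ c hx

lemma smul_mem_B0r (c : ℂ) {x : X →L[ℂ] X} (hx : x ∈ B0r (K := X) M) :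
    c • x ∈ B0r (K := X) M := by
  rw [B0r_eq] at *; exact Submodule.smul_mem _ c hx

lemma rsmul_mem_B0l (c : ℝ) {x : X →L[ℂ] X} (hx : x ∈ B0l (H := X) M) :
    c • x ∈ B0l (H := X) M := by
  have h : (c : ℂ) • x = c • x := by rw [← algebraMap_smul ℂ c x]; norm_num
  rw [← h]; exact smul_mem_B0l _ hx

lemma comp_right_mem_B0l {x : X →L[ℂ] X} (hx : x ∈ B0l (H := X) M) (r : X →L[ℂ] X) :
    x.comp r ∈ B0l (H := X) M := by
  set φ : (X →L[ℂ] X) →L[ℂ] (X →L[ℂ] X) := (ContinuousLinearMap.compL ℂ X X X).flip r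
  have hφ : ∀ s : X →L[ℂ] X, φ s = s.comp r := fun s => rfl
  have h1 : φ x ∈ closure (φ '' _) := image_closure_subset_closure_image φ.continuous ⟨x, hx, rfl⟩
  rw [← hφ]
  refine closure_mono ?_ h1
  rintro - ⟨s, hs, rfl⟩
  rw [hφ]
  refine Submodule.span_induction (fun a ha => ?_) (by simp)
    (fun a b _ _ pa pb => ?_) (fun c a _ pa => ?_) hs
  · obtain ⟨A, hA, T, rfl⟩ := ha
    rw [ContinuousLinearMap.comp_assoc]
    exact Submodule.subset_span ⟨A, hA, T.comp r, rfl⟩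
  · rw [ContinuousLinearMap.add_comp]; exact Submodule.add_mem _ pa pb
  · rw [ContinuousLinearMap.smul_comp]; exact Submodule.smul_mem _ c pa

lemma comp_left_mem_B0r {x : X →L[ℂ] X} (hx : x ∈ B0r (K := X) M) (r : X →L[ℂ] X) :
    r.comp x ∈ B0r (K := X) M := by
  set φ : (X →L[ℂ] X) →L[ℂ] (X →L[ℂ] X) := ContinuousLinearMap.compL ℂ X X X r
  have hφ : ∀ s : X →L[ℂ] X, φ s = r.comp s := fun s => rfl
  have h1 : φ x ∈ closure (φ '' _) := image_closure_subset_closure_image φ.continuous ⟨x, hx, rfl⟩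
  rw [← hφ]
  refine closure_mono ?_ h1
  rintro - ⟨s, hs, rfl⟩
  rw [hφ]
  refine Submodule.span_induction (fun a ha => ?_) (by simp)
    (fun a b _ _ pa pb => ?_) (fun c a _ pa => ?_) hs
  · obtain ⟨A, hA, T, rfl⟩ := ha
    rw [← ContinuousLinearMap.comp_assoc]
    exact Submodule.subset_span ⟨A, hA, r.comp T, rfl⟩
  · rw [ContinuousLinearMap.comp_add]; exact Submodule.add_mem _ pa pb
  · rw [ContinuousLinearMap.comp_smul]; exact Submodule.smul_mem _ c pa

lemma norm_rsmul (c : ℝ) (A : X →L[ℂ] X) : ‖c • A‖ = |c| * ‖A‖ := by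
  rw [@norm_smul ℝ (X →L[ℂ] X) _ _ _ _, Real.norm_eq_abs]

/-- Lemma A, span version. -/
lemma lemA_span (hC : 0 ≤ C) {x : X →L[ℂ] X}
    (hx : x ∈ Submodule.span ℂ {S : X →L[ℂ] X | ∃ A ∈ M, ∃ T : X →L[ℂ] X, S = A.comp T})
    {ε : ℝ} (hε : 0 < ε) :
    ∃ (F : Finset (X →L[ℂ] X)) (δ : ℝ), ↑F ⊆ M ∧ 0 < δ ∧
      ∀ J : X →L[ℂ] X, ‖J‖ ≤ C → (∀ A ∈ F, ‖J.comp A - A‖ ≤ δ) →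
        ‖J.comp x - x‖ ≤ ε := by
  classical
  induction hx using Submodule.span_induction generalizing ε with
  | mem a ha =>
    obtain ⟨A, hA, T, rfl⟩ := ha
    refine ⟨{A}, ε / (1 + ‖T‖), by simpa using hA, by positivity, fun J _ hJ => ?_⟩
    have h1 : J.comp (A.comp T) - A.comp T = (J.comp A - A).comp T := by
      rw [ContinuousLinearMap.sub_comp, ContinuousLinearMap.comp_assoc]
    rw [h1]
    calc ‖(J.comp A - A).comp T‖ ≤ ‖J.comp A - A‖ * ‖T‖ := opNorm_comp_le _ _
      _ ≤ (ε / (1 + ‖T‖)) * ‖T‖ := by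
          have := hJ A (Finset.mem_singleton_self A)
          have h2 : (0:ℝ) ≤ ‖T‖ := norm_nonneg T
          nlinarith
      _ ≤ ε := by
          rw [div_mul_eq_mul_div, div_le_iff₀ (by positivity)]
          nlinarith [norm_nonneg T]
  | zero =>
    exact ⟨∅, 1, by simp, one_pos, fun J _ _ => by simp [le_of_lt hε]⟩
  | add a b _ _ pa pb =>
    obtain ⟨Fa, δa, hFa, hδa, ha⟩ := pa (half_pos hε)
    obtain ⟨Fb, δb, hFb, hδb, hb⟩ := pb (half_pos hε)
    refine ⟨Fa ∪ Fb, min δa δb, ?_, lt_min hδa hδb, fun J hJC hJ => ?_⟩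
    · rw [Finset.coe_union]; exact Set.union_subset hFa hFb
    · have h1 : J.comp (a + b) - (a + b) = (J.comp a - a) + (J.comp b - b) := by
        rw [ContinuousLinearMap.comp_add]; abel
      rw [h1]
      have h2 := ha J hJC (fun A hA => le_trans (hJ A (Finset.mem_union_left _ hA)) (min_le_left _ _))
      have h3 := hb J hJC (fun A hA => le_trans (hJ A (Finset.mem_union_right _ hA)) (min_le_right _ _))
      calc ‖(J.comp a - a) + (J.comp b - b)‖ ≤ ‖J.comp a - a‖ + ‖J.comp b - b‖ := norm_add_le _ _
        _ ≤ ε / 2 + ε / 2 := add_le_add h2 h3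
        _ = ε := by ring
  | smul c a _ pa =>
    obtain ⟨Fa, δa, hFa, hδa, ha⟩ := pa (show (0:ℝ) < ε / (1 + ‖c‖) by positivity)
    refine ⟨Fa, δa, hFa, hδa, fun J hJC hJ => ?_⟩
    have h1 : J.comp (c • a) - c • a = c • (J.comp a - a) := by
      rw [ContinuousLinearMap.comp_smul, smul_sub]
    have hns : ‖c • (J.comp a - a)‖ = ‖c‖ * ‖J.comp a - a‖ := by
      rw [@norm_smul ℂ (X →L[ℂ] X) _ _ _ _]
    rw [h1, hns]
    have h2 := ha J hJC hJ
    have h3 : (0:ℝ) ≤ ‖c‖ := norm_nonneg c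
    have e1 : ε / (1 + ‖c‖) * (1 + ‖c‖) = ε := div_mul_cancel₀ _ (by positivity)
    have e2 : (0:ℝ) ≤ ε / (1 + ‖c‖) := div_nonneg hε.le (by positivity)
    nlinarith [mul_le_mul_of_nonneg_left h2 h3]

/-- Lemma A, closure version. -/
lemma lemA (hC : 1 ≤ C) {x : X →L[ℂ] X} (hx : x ∈ B0l (H := X) M)
    {ε : ℝ} (hε : 0 < ε) :
    ∃ (F : Finset (X →L[ℂ] X)) (δ : ℝ), ↑F ⊆ M ∧ 0 < δ ∧
      ∀ J : X →L[ℂ] X, ‖J‖ ≤ C → (∀ A ∈ F, ‖J.comp A - A‖ ≤ δ) →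
        ‖J.comp x - x‖ ≤ ε := by
  have hC0 : 0 ≤ C := le_trans zero_le_one hC
  obtain ⟨S, hS, hdist⟩ := Metric.mem_closure_iff.mp hx (ε / (2 * (C + 1)))
    (by positivity)
  obtain ⟨F, δ, hF, hδ, hmain⟩ := lemA_span hC0 hS (half_pos hε)
  refine ⟨F, δ, hF, hδ, fun J hJC hJ => ?_⟩
  have hxS : ‖x - S‖ ≤ ε / (2 * (C + 1)) := le_of_lt (by rwa [dist_eq_norm] at hdist)
  have h1 : J.comp x - x = J.comp (x - S) + (J.comp S - S) + (S - x) := by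
    rw [ContinuousLinearMap.comp_sub]; abel
  rw [h1]
  have h2 : ‖J.comp (x - S)‖ ≤ C * ‖x - S‖ :=
    le_trans (opNorm_comp_le _ _) (mul_le_mul_of_nonneg_right hJC (norm_nonneg _))
  have h3 := hmain J hJC hJ
  have h4 : ‖S - x‖ = ‖x - S‖ := norm_sub_rev _ _
  have h5 : ‖x - S‖ * (C + 1) ≤ ε / 2 := by
    have e1 : ε / (2 * (C + 1)) * (2 * (C + 1)) = ε := div_mul_cancel₀ _ (by positivity)
    nlinarith [norm_nonneg (x - S)]
  calc ‖J.comp (x - S) + (J.comp S - S) + (S - x)‖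
      ≤ ‖J.comp (x - S)‖ + ‖J.comp S - S‖ + ‖S - x‖ := norm_add₃_le
    _ ≤ C * ‖x - S‖ + ε / 2 + ‖x - S‖ := by
        exact add_le_add (add_le_add h2 h3) (le_of_eq h4)
    _ = ‖x - S‖ * (C + 1) + ε / 2 := by ring
    _ ≤ ε / 2 + ε / 2 := by linarith
    _ = ε := by ring

/-- The key simultaneous approximate-unit lemma for three elements of `B0l`. -/
lemma key3 (hC : 1 ≤ C)
    (happrox : ∀ ε > (0:ℝ), ∀ F : Finset (X →L[ℂ] X), ↑F ⊆ M →
      ∃ J ∈ M, ‖J‖ ≤ C ∧ ∀ A ∈ F, ‖J.comp A - A‖ ≤ ε)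
    {x y z : X →L[ℂ] X} (hx : x ∈ B0l (H := X) M) (hy : y ∈ B0l (H := X) M)
    (hz : z ∈ B0l (H := X) M) {ε : ℝ} (hε : 0 < ε) :
    ∃ J ∈ M, ‖J‖ ≤ C ∧ ‖J.comp x - x‖ ≤ ε ∧ ‖J.comp y - y‖ ≤ ε ∧ ‖J.comp z - z‖ ≤ ε := by
  classical
  obtain ⟨Fx, δx, hFx, hδx, hmx⟩ := lemA hC hx hε
  obtain ⟨Fy, δy, hFy, hδy, hmy⟩ := lemA hC hy hε
  obtain ⟨Fz, δz, hFz, hδz, hmz⟩ := lemA hC hz hε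
  obtain ⟨J, hJM, hJC, hJ⟩ := happrox (min δx (min δy δz)) (lt_min hδx (lt_min hδy hδz))
    (Fx ∪ Fy ∪ Fz) (by
      rw [Finset.coe_union, Finset.coe_union]
      exact Set.union_subset (Set.union_subset hFx hFy) hFz)
  refine ⟨J, hJM, hJC, ?_, ?_, ?_⟩
  · exact hmx J hJC fun A hA => le_trans
      (hJ A (Finset.mem_union_left _ (Finset.mem_union_left _ hA)))
      (min_le_left _ _)
  · exact hmy J hJC fun A hA => le_trans
      (hJ A (Finset.mem_union_left _ (Finset.mem_union_right _ hA)))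
      (le_trans (min_le_right _ _) (min_le_left _ _))
  · exact hmz J hJC fun A hA => le_trans
      (hJ A (Finset.mem_union_right _ hA))
      (le_trans (min_le_right _ _) (min_le_right _ _))

end Stmt0Aux

namespace Stmt0Aux

variable {X : Type*} [NormedAddCommGroup X] [InnerProductSpace ℂ X] [CompleteSpace X]
  {M : Set (X →L[ℂ] X)} {C : ℝ}

lemma adjoint_mem_B0r_of_B0l (hstar : ∀ {A : X →L[ℂ] X}, A ∈ M → adjoint A ∈ M)
    {x : X →L[ℂ] X} (hx : x ∈ B0l (H := X) M) : adjoint x ∈ B0r (K := X) M := by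
  have hc : Continuous (fun S : X →L[ℂ] X => adjoint S) :=
    (ContinuousLinearMap.adjoint (E := X) (F := X) (𝕜 := ℂ)).continuous
  have hP : IsClosed {S : X →L[ℂ] X | adjoint S ∈ B0r (K := X) M} :=
    IsClosed.preimage hc isClosed_closure
  refine closure_minimal (fun s hs => ?_) hP hx
  refine Submodule.span_induction
    (p := fun y _ => adjoint y ∈ B0r (K := X) M) (fun a ha => ?_) ?_
    (fun a b _ _ pa pb => ?_) (fun c a _ pa => ?_) hs
  · obtain ⟨A, hA, T, rfl⟩ := ha
    rw [ContinuousLinearMap.adjoint_comp]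
    exact mem_B0r_gen (hstar hA) _
  · show adjoint (0 : X →L[ℂ] X) ∈ B0r (K := X) M
    rw [map_zero]
    exact zero_mem_B0r
  · show adjoint (a + b) ∈ B0r (K := X) M
    rw [map_add]; exact add_mem_B0r pa pb
  · show adjoint (c • a) ∈ B0r (K := X) M
    rw [map_smulₛₗ]; exact smul_mem_B0r _ pa

lemma adjoint_mem_B0l_of_B0r (hstar : ∀ {A : X →L[ℂ] X}, A ∈ M → adjoint A ∈ M)
    {x : X →L[ℂ] X} (hx : x ∈ B0r (K := X) M) : adjoint x ∈ B0l (H := X) M := by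
  have hc : Continuous (fun S : X →L[ℂ] X => adjoint S) :=
    (ContinuousLinearMap.adjoint (E := X) (F := X) (𝕜 := ℂ)).continuous
  have hP : IsClosed {S : X →L[ℂ] X | adjoint S ∈ B0l (H := X) M} :=
    IsClosed.preimage hc isClosed_closure
  refine closure_minimal (fun s hs => ?_) hP hx
  refine Submodule.span_induction
    (p := fun y _ => adjoint y ∈ B0l (H := X) M) (fun a ha => ?_) ?_
    (fun a b _ _ pa pb => ?_) (fun c a _ pa => ?_) hs
  · obtain ⟨A, hA, T, rfl⟩ := ha
    rw [ContinuousLinearMap.adjoint_comp]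
    exact mem_B0l_gen (hstar hA) _
  · show adjoint (0 : X →L[ℂ] X) ∈ B0l (H := X) M
    rw [map_zero]
    exact zero_mem_B0l
  · show adjoint (a + b) ∈ B0l (H := X) M
    rw [map_add]; exact add_mem_B0l pa pb
  · show adjoint (c • a) ∈ B0l (H := X) M
    rw [map_smulₛₗ]; exact smul_mem_B0l _ pa

end Stmt0Aux

namespace Stmt0Aux
section Cohen
variable {X : Type*} [NormedAddCommGroup X] [NormedSpace ℂ X] [CompleteSpace X]
  {M : Set (X →L[ℂ] X)} {C : ℝ}

/-- Cohen factorization. -/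
lemma cohen (hM0 : (0 : X →L[ℂ] X) ∈ M)
    (hMadd : ∀ {A B : X →L[ℂ] X}, A ∈ M → B ∈ M → A + B ∈ M)
    (hMsmul : ∀ (c : ℂ) {A : X →L[ℂ] X}, A ∈ M → c • A ∈ M)
    (hMclosed : IsClosed M) (hC : 1 ≤ C)
    (happrox : ∀ ε > (0:ℝ), ∀ F : Finset (X →L[ℂ] X), ↑F ⊆ M →
      ∃ J ∈ M, ‖J‖ ≤ C ∧ ∀ A ∈ F, ‖J.comp A - A‖ ≤ ε)
    {x : X →L[ℂ] X} (hx : x ∈ B0l (H := X) M) :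
    ∃ a ∈ M, ∃ y : X →L[ℂ] X, x = a.comp y ∧
      ∀ P : Set (X →L[ℂ] X), IsClosed P → x ∈ P →
        (∀ r : X →L[ℂ] X, ∀ s ∈ P, r.comp s ∈ P) → y ∈ P := by
  classical
  have hrsmulM : ∀ (c : ℝ) {A : (X →L[ℂ] X)}, A ∈ M → c • A ∈ M := by
    intro c A hA
    have : (c : ℂ) • A = c • A := by rw [← algebraMap_smul ℂ c A]; norm_num
    rw [← this]; exact hMsmul _ hA
  have hn1 : ‖(1 : (X →L[ℂ] X))‖ ≤ 1 := by
    rw [ContinuousLinearMap.one_def]; exact norm_id_le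
  set γ : ℝ := (2 * (C + 2))⁻¹ with hγdef
  have hγ0 : 0 < γ := by positivity
  have hγC : γ * (C + 2) = 1 / 2 := by
    rw [hγdef]; field_simp
  have hγ1 : γ < 1 := by nlinarith
  have h1γ0 : 0 < 1 - γ := by linarith
  have h1γ1 : 1 - γ < 1 := by linarith
  -- the invariant
  set Inv : ℕ → ((X →L[ℂ] X))ˣ → Prop := fun n u =>
    ((1 : (X →L[ℂ] X)) - ((1-γ)^n) • (↑u⁻¹ : (X →L[ℂ] X)) ∈ B0l (H := X) M) ∧
    ((↑u : (X →L[ℂ] X)) - ((1-γ)^n) • (1 : (X →L[ℂ] X)) ∈ M) with hInvdef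
  -- the inductive step
  have step : ∀ (n : ℕ) (δ : ℝ), 0 < δ → ∀ u : ((X →L[ℂ] X))ˣ, Inv n u →
      ∃ v : ((X →L[ℂ] X))ˣ, Inv (n+1) v ∧ ‖(↑v - ↑u : (X →L[ℂ] X))‖ ≤ (γ*(C+1)) * (1-γ)^n ∧
        ‖(↑v⁻¹ : (X →L[ℂ] X)) * x - (↑u⁻¹ : (X →L[ℂ] X)) * x‖ ≤ δ := by
    intro n δ hδ u hu
    set z : (X →L[ℂ] X) := 1 - ((1-γ)^n) • (↑u⁻¹ : (X →L[ℂ] X)) with hzdef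
    have hz : z ∈ B0l (H := X) M := hu.1
    have hzx : z.comp x ∈ B0l (H := X) M := comp_right_mem_B0l hz x
    have hKpos : 0 < 4 * γ * (1 + ‖(↑u⁻¹ : (X →L[ℂ] X))‖) := by positivity
    set ε' : ℝ := min 1 (δ / (4 * γ * (1 + ‖(↑u⁻¹ : (X →L[ℂ] X))‖))) with hε'def
    have hε'0 : 0 < ε' := lt_min one_pos (by positivity)
    have hε'1 : ε' ≤ 1 := min_le_left _ _
    have hε'2 : ε' * (4 * γ * (1 + ‖(↑u⁻¹ : (X →L[ℂ] X))‖)) ≤ δ := by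
      have h := min_le_right 1 (δ / (4 * γ * (1 + ‖(↑u⁻¹ : (X →L[ℂ] X))‖)))
      calc ε' * (4 * γ * (1 + ‖(↑u⁻¹ : (X →L[ℂ] X))‖))
          ≤ (δ / (4 * γ * (1 + ‖(↑u⁻¹ : (X →L[ℂ] X))‖))) * (4 * γ * (1 + ‖(↑u⁻¹ : (X →L[ℂ] X))‖)) :=
            mul_le_mul_of_nonneg_right h hKpos.le
        _ = δ := div_mul_cancel₀ _ hKpos.ne'
    obtain ⟨e, heM, heC, hex, hez, hezx⟩ := key3 hC happrox hx hz hzx hε'0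
    have husmul : ((1-γ)^n) • (↑u⁻¹ : (X →L[ℂ] X)) = 1 - z := by rw [hzdef]; abel
    set q : ℝ := γ * (1-γ)^n with hqdef
    have hq0 : 0 < q := by positivity
    set t : (X →L[ℂ] X) := q • ((e - 1) * ↑u⁻¹) with htdef
    have ht : t = γ • ((e - 1) - (e * z - z)) := by
      have h1 : (e - 1) * (1 - z) = (e - 1) - (e * z - z) := by noncomm_ring
      rw [← h1, htdef, hqdef, ← smul_smul, ← husmul, mul_smul_comm]
    have htnorm : ‖t‖ ≤ 1 / 2 := by
      rw [ht]
      have h2 : ‖(e - 1) - (e * z - z)‖ ≤ (C + 1) + ε' := by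
        have h3 : ‖e - 1‖ ≤ C + 1 :=
          le_trans (norm_sub_le _ _) (add_le_add heC hn1)
        have h4 : ‖e * z - z‖ ≤ ε' := by rw [mul_def]; exact hez
        exact le_trans (norm_sub_le _ _) (add_le_add h3 h4)
      rw [norm_rsmul, abs_of_nonneg hγ0.le]
      calc γ * ‖(e - 1) - (e * z - z)‖ ≤ γ * ((C + 1) + ε') := by nlinarith
        _ ≤ γ * (C + 2) := by nlinarith
        _ = 1 / 2 := hγC
    have htnorm' : ‖-t‖ < 1 := by rw [norm_neg]; linarith
    set w : ((X →L[ℂ] X))ˣ := Units.oneSub (-t) htnorm' with hwdef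
    have hw : (↑w : (X →L[ℂ] X)) = 1 + t := by
      rw [hwdef]
      show (1 : (X →L[ℂ] X)) - (-t) = 1 + t
      abel
    have hwinv1 : (↑w⁻¹ : (X →L[ℂ] X)) = 1 - t * ↑w⁻¹ := by
      have h := w.mul_inv
      rw [hw, add_mul, one_mul] at h
      exact eq_sub_of_add_eq h
    have hwinv1' : (↑w⁻¹ : (X →L[ℂ] X)) = 1 - ↑w⁻¹ * t := by
      have h := w.inv_mul
      rw [hw, mul_add, mul_one] at h
      exact eq_sub_of_add_eq h
    have hwinvnorm : ‖(↑w⁻¹ : (X →L[ℂ] X))‖ ≤ 2 := by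
      have h1 : ‖(↑w⁻¹ : (X →L[ℂ] X))‖ ≤ ‖(1 : (X →L[ℂ] X))‖ + ‖t * ↑w⁻¹‖ := by
        nth_rewrite 1 [hwinv1]
        exact norm_sub_le _ _
      have h2 : ‖t * (↑w⁻¹ : (X →L[ℂ] X))‖ ≤ ‖t‖ * ‖(↑w⁻¹ : (X →L[ℂ] X))‖ := norm_mul_le _ _
      have h3 : (0:ℝ) ≤ ‖(↑w⁻¹ : (X →L[ℂ] X))‖ := norm_nonneg _
      nlinarith
    set v : ((X →L[ℂ] X))ˣ := w * u with hvdef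
    have hvinv : (↑v⁻¹ : (X →L[ℂ] X)) = ↑u⁻¹ * ↑w⁻¹ := by
      rw [hvdef, mul_inv_rev, Units.val_mul]
    have hvval : (↑v : (X →L[ℂ] X)) = ↑u + q • (e - 1) := by
      rw [hvdef, Units.val_mul, hw, add_mul, one_mul, htdef, smul_mul_assoc, mul_assoc,
        u.inv_mul, mul_one]
    have hscalar : q + (1-γ)^(n+1) = (1-γ)^n := by rw [hqdef]; ring
    have hva : ‖(↑v - ↑u : (X →L[ℂ] X))‖ ≤ (γ*(C+1)) * (1-γ)^n := by
      rw [hvval, add_sub_cancel_left, norm_rsmul, abs_of_nonneg hq0.le]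
      have h3 : ‖e - 1‖ ≤ C + 1 := le_trans (norm_sub_le _ _) (add_le_add heC hn1)
      calc q * ‖e - 1‖ ≤ q * (C+1) := by nlinarith
        _ = (γ*(C+1)) * (1-γ)^n := by rw [hqdef]; ring
    have hv2 : (↑v : (X →L[ℂ] X)) - ((1-γ)^(n+1)) • 1 ∈ M := by
      have heq : (↑v : (X →L[ℂ] X)) - ((1-γ)^(n+1)) • 1
          = (↑u - ((1-γ)^n) • 1) + q • e := by
        rw [hvval, smul_sub, ← hscalar, add_smul]; abel
      rw [heq]; exact hMadd hu.2 (hrsmulM q heM)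
    have hz' : (1 : (X →L[ℂ] X)) - ((1-γ)^(n+1)) • (↑v⁻¹ : (X →L[ℂ] X)) ∈ B0l (H := X) M := by
      have h2 : ((1 : (X →L[ℂ] X)) - ((1-γ)^(n+1)) • (↑v⁻¹ : (X →L[ℂ] X))) * ↑w
          = q • (e * ↑u⁻¹) + z := by
        rw [hvinv, sub_mul, one_mul, smul_mul_assoc, mul_assoc, w.inv_mul, mul_one,
          hw, htdef, hzdef, sub_mul, one_mul, smul_sub, ← hscalar, add_smul]
        abel
      have hkey : (1 : (X →L[ℂ] X)) - ((1-γ)^(n+1)) • (↑v⁻¹ : (X →L[ℂ] X))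
          = (q • (e * ↑u⁻¹) + z) * ↑w⁻¹ := by
        have h3 := congrArg (fun s => s * (↑w⁻¹ : (X →L[ℂ] X))) h2
        simpa [mul_assoc, w.mul_inv] using h3
      rw [hkey, mul_def]
      refine comp_right_mem_B0l (add_mem_B0l (rsmul_mem_B0l q ?_) hz) _
      rw [mul_def]; exact mem_B0l_gen heM _
    have htx : ‖t * x‖ ≤ 2 * γ * ε' := by
      have h1' : (e - 1 - (e * z - z)) * x = (e*x - x) - (e*(z*x) - z*x) := by
        noncomm_ring
      have h1 : t * x = γ • ((e*x - x) - (e*(z*x) - z*x)) := by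
        rw [ht, smul_mul_assoc, h1']
      rw [h1, norm_rsmul, abs_of_nonneg hγ0.le]
      have h2 : ‖e*x - x‖ ≤ ε' := by rw [mul_def]; exact hex
      have h3 : ‖e*(z*x) - z*x‖ ≤ ε' := by rw [mul_def, mul_def]; exact hezx
      have h4 := norm_sub_le (e*x - x) (e*(z*x) - z*x)
      nlinarith
    have hyc : ‖(↑v⁻¹ : (X →L[ℂ] X)) * x - (↑u⁻¹ : (X →L[ℂ] X)) * x‖ ≤ δ := by
      have hsub : (↑w⁻¹ : (X →L[ℂ] X)) - 1 = -(↑w⁻¹ * t) := by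
        nth_rewrite 1 [hwinv1']
        abel
      have h1 : (↑v⁻¹ : (X →L[ℂ] X)) * x - (↑u⁻¹ : (X →L[ℂ] X)) * x
          = ↑u⁻¹ * (((↑w⁻¹ : (X →L[ℂ] X)) - 1) * x) := by
        rw [hvinv]; noncomm_ring
      have h2 : (↑u⁻¹ : (X →L[ℂ] X)) * ((-(↑w⁻¹ * t) : (X →L[ℂ] X)) * x)
          = -(↑u⁻¹ * (↑w⁻¹ * (t * x))) := by noncomm_ring
      rw [h1, hsub, h2, norm_neg]
      have h3 : ‖(↑u⁻¹ : (X →L[ℂ] X)) * ((↑w⁻¹ : (X →L[ℂ] X)) * (t * x))‖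
          ≤ ‖(↑u⁻¹ : (X →L[ℂ] X))‖ * (‖(↑w⁻¹ : (X →L[ℂ] X))‖ * ‖t * x‖) :=
        le_trans (norm_mul_le _ _)
          (mul_le_mul_of_nonneg_left (norm_mul_le _ _) (norm_nonneg _))
      have h4 : (0:ℝ) ≤ ‖(↑u⁻¹ : (X →L[ℂ] X))‖ := norm_nonneg _
      have h5 : (0:ℝ) ≤ ‖t * x‖ := norm_nonneg _
      have h6 : (0:ℝ) ≤ ‖(↑w⁻¹ : (X →L[ℂ] X))‖ := norm_nonneg _
      have s1 : ‖(↑w⁻¹ : (X →L[ℂ] X))‖ * ‖t * x‖ ≤ 2 * (2 * γ * ε') :=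
        mul_le_mul hwinvnorm htx h5 (by norm_num)
      have s2 : ‖(↑u⁻¹ : (X →L[ℂ] X))‖ * (‖(↑w⁻¹ : (X →L[ℂ] X))‖ * ‖t * x‖)
          ≤ ‖(↑u⁻¹ : (X →L[ℂ] X))‖ * (2 * (2 * γ * ε')) := mul_le_mul_of_nonneg_left s1 h4
      have s3 : (0:ℝ) ≤ γ * ε' := mul_nonneg hγ0.le hε'0.le
      calc ‖(↑u⁻¹ : (X →L[ℂ] X)) * ((↑w⁻¹ : (X →L[ℂ] X)) * (t * x))‖
          ≤ ‖(↑u⁻¹ : (X →L[ℂ] X))‖ * (‖(↑w⁻¹ : (X →L[ℂ] X))‖ * ‖t * x‖) := h3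
        _ ≤ ‖(↑u⁻¹ : (X →L[ℂ] X))‖ * (2 * (2 * γ * ε')) := s2
        _ ≤ ε' * (4 * γ * (1 + ‖(↑u⁻¹ : (X →L[ℂ] X))‖)) := by nlinarith
        _ ≤ δ := hε'2
    exact ⟨v, ⟨hz', hv2⟩, hva, hyc⟩
  -- base case
  have h0 : Inv 0 1 := by
    constructor
    · have he : (1 : (X →L[ℂ] X)) - ((1-γ)^0) • (↑(1 : ((X →L[ℂ] X))ˣ)⁻¹ : (X →L[ℂ] X)) = 0 := by
        simp
      rw [he]; exact zero_mem_B0l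
    · have he : (↑(1 : ((X →L[ℂ] X))ˣ) : (X →L[ℂ] X)) - ((1-γ)^0) • 1 = 0 := by simp
      rw [he]; exact hM0
  -- the recursively defined sequence
  let F : ∀ n : ℕ, {u : ((X →L[ℂ] X))ˣ // Inv n u} := fun n =>
    Nat.rec ⟨1, h0⟩ (fun k p => ⟨(step k ((1/2:ℝ)^k) (by positivity) p.1 p.2).choose,
      (step k ((1/2:ℝ)^k) (by positivity) p.1 p.2).choose_spec.1⟩) n
  have hFs : ∀ n : ℕ, ‖(↑(F (n+1)).1 - ↑(F n).1 : (X →L[ℂ] X))‖ ≤ (γ*(C+1)) * (1-γ)^n ∧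
      ‖(↑(F (n+1)).1⁻¹ : (X →L[ℂ] X)) * x - (↑(F n).1⁻¹ : (X →L[ℂ] X)) * x‖ ≤ (1/2:ℝ)^n :=
    fun n => (step n ((1/2:ℝ)^n) (by positivity) (F n).1 (F n).2).choose_spec.2
  have hCauchyA : CauchySeq (fun n => (↑(F n).1 : (X →L[ℂ] X))) := by
    refine cauchySeq_of_le_geometric (1-γ) (γ*(C+1)) h1γ1 (fun n => ?_)
    rw [dist_eq_norm, norm_sub_rev]
    exact (hFs n).1
  obtain ⟨a, ha⟩ := cauchySeq_tendsto_of_complete hCauchyA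
  have hCauchyY : CauchySeq (fun n => (↑(F n).1⁻¹ : (X →L[ℂ] X)) * x) := by
    refine cauchySeq_of_le_geometric (1/2) 1 (by norm_num) (fun n => ?_)
    rw [dist_eq_norm, norm_sub_rev, one_mul]
    exact (hFs n).2
  obtain ⟨y, hy⟩ := cauchySeq_tendsto_of_complete hCauchyY
  have haM : a ∈ M := by
    have h1 : Filter.Tendsto (fun n : ℕ => ((1-γ)^n : ℝ)) Filter.atTop (nhds 0) :=
      tendsto_pow_atTop_nhds_zero_of_lt_one h1γ0.le h1γ1
    have h2 : Filter.Tendsto (fun n : ℕ => ((1-γ)^n : ℝ) • (1 : (X →L[ℂ] X)))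
        Filter.atTop (nhds 0) := by
      have h3 := h1.smul_const (1 : (X →L[ℂ] X))
      rwa [zero_smul] at h3
    have h3 : Filter.Tendsto (fun n => (↑(F n).1 : (X →L[ℂ] X)) - ((1-γ)^n) • 1)
        Filter.atTop (nhds a) := by
      have h4 := ha.sub h2
      rwa [sub_zero] at h4
    exact hMclosed.mem_of_tendsto h3 (Filter.Eventually.of_forall (fun n => (F n).2.2))
  have hxy : x = a * y := by
    have h1 : Filter.Tendsto (fun n => (↑(F n).1 : (X →L[ℂ] X)) * ((↑(F n).1⁻¹ : (X →L[ℂ] X)) * x))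
        Filter.atTop (nhds (a*y)) := ha.mul hy
    have h2 : (fun n => (↑(F n).1 : (X →L[ℂ] X)) * ((↑(F n).1⁻¹ : (X →L[ℂ] X)) * x))
        = fun _ => x := by
      funext n
      rw [← mul_assoc, (F n).1.mul_inv, one_mul]
    rw [h2] at h1
    exact (tendsto_nhds_unique h1 tendsto_const_nhds).symm
  refine ⟨a, haM, y, ?_, ?_⟩
  · rw [← mul_def]; exact hxy
  · intro P hPc hxP hPst
    refine hPc.mem_of_tendsto hy (Filter.Eventually.of_forall (fun n => ?_))
    rw [mul_def]
    exact hPst _ x hxP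


end Cohen
end Stmt0Aux

/-- For a Hilbert module `(H, M)`, the set `B₀(H,H) = B₀ˡ(H,H) ∩ B₀ʳ(H,H)`
is a C*-subalgebra of `B(H)`, and `S ∈ B₀(H,H)` iff `S = A ∘ T ∘ B` with `A, B ∈ M`,
`T ∈ B(H)`. -/
theorem stmt0 {H : Type*} [NormedAddCommGroup H] [InnerProductSpace ℂ H] [CompleteSpace H]
    (M : Set (H →L[ℂ] H)) (hM : IsHilbertModule H M) :
    (0 : H →L[ℂ] H) ∈ B0l (H := H) M ∩ B0r (K := H) M ∧
    (∀ A B : H →L[ℂ] H, A ∈ B0l (H := H) M ∩ B0r (K := H) M →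
      B ∈ B0l (H := H) M ∩ B0r (K := H) M → A + B ∈ B0l (H := H) M ∩ B0r (K := H) M) ∧
    (∀ (c : ℂ) (A : H →L[ℂ] H), A ∈ B0l (H := H) M ∩ B0r (K := H) M →
      c • A ∈ B0l (H := H) M ∩ B0r (K := H) M) ∧
    (∀ A B : H →L[ℂ] H, A ∈ B0l (H := H) M ∩ B0r (K := H) M →
      B ∈ B0l (H := H) M ∩ B0r (K := H) M → A.comp B ∈ B0l (H := H) M ∩ B0r (K := H) M) ∧
    (∀ A : H →L[ℂ] H, A ∈ B0l (H := H) M ∩ B0r (K := H) M →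
      ContinuousLinearMap.adjoint A ∈ B0l (H := H) M ∩ B0r (K := H) M) ∧
    IsClosed (B0l (H := H) M ∩ B0r (K := H) M) ∧
    (∀ S : H →L[ℂ] H, S ∈ B0l (H := H) M ∩ B0r (K := H) M ↔
      ∃ A ∈ M, ∃ B ∈ M, ∃ T : H →L[ℂ] H, S = A.comp (T.comp B)) := by
  obtain ⟨C₀, hap0⟩ := hM.toIsBanachModule.approx_unit
  set C : ℝ := max C₀ 1 with hCdef
  have hC : 1 ≤ C := le_max_right _ _
  have happrox : ∀ ε > (0:ℝ), ∀ F : Finset (H →L[ℂ] H), ↑F ⊆ M →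
      ∃ J ∈ M, ‖J‖ ≤ C ∧ ∀ A ∈ F, ‖J.comp A - A‖ ≤ ε := by
    intro ε hε F hF
    obtain ⟨J, hJM, hJn, hJ⟩ := hap0 ε hε F hF
    exact ⟨J, hJM, le_trans hJn (le_max_left _ _), fun A hA => (hJ A hA).1⟩
  have hstar : ∀ {A : H →L[ℂ] H}, A ∈ M → ContinuousLinearMap.adjoint A ∈ M :=
    fun hA => hM.star_mem hA
  refine ⟨⟨Stmt0Aux.zero_mem_B0l, Stmt0Aux.zero_mem_B0r⟩, ?_, ?_, ?_, ?_, ?_, ?_⟩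
  · rintro A B ⟨hA1, hA2⟩ ⟨hB1, hB2⟩
    exact ⟨Stmt0Aux.add_mem_B0l hA1 hB1, Stmt0Aux.add_mem_B0r hA2 hB2⟩
  · rintro c A ⟨hA1, hA2⟩
    exact ⟨Stmt0Aux.smul_mem_B0l c hA1, Stmt0Aux.smul_mem_B0r c hA2⟩
  · rintro A B ⟨hA1, hA2⟩ ⟨hB1, hB2⟩
    exact ⟨Stmt0Aux.comp_right_mem_B0l hA1 B, Stmt0Aux.comp_left_mem_B0r hB2 A⟩
  · rintro A ⟨hA1, hA2⟩
    exact ⟨Stmt0Aux.adjoint_mem_B0l_of_B0r hstar hA2,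
      Stmt0Aux.adjoint_mem_B0r_of_B0l hstar hA1⟩
  · exact IsClosed.inter isClosed_closure isClosed_closure
  · intro S
    constructor
    · rintro ⟨hSl, hSr⟩
      obtain ⟨a, haM, y, hxy, hyP⟩ := Stmt0Aux.cohen hM.toIsBanachModule.zero_mem
        (fun h1 h2 => hM.toIsBanachModule.add_mem h1 h2)
        (fun c _ h1 => hM.toIsBanachModule.smul_mem c h1)
        hM.toIsBanachModule.isClosed hC happrox hSl
      have hyB0r : y ∈ B0r (K := H) M :=
        hyP (B0r (K := H) M) isClosed_closure hSr
          (fun r s hs => Stmt0Aux.comp_left_mem_B0r hs r)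
      have hyadj : ContinuousLinearMap.adjoint y ∈ B0l (H := H) M :=
        Stmt0Aux.adjoint_mem_B0l_of_B0r hstar hyB0r
      obtain ⟨b, hbM, w, hyw, -⟩ := Stmt0Aux.cohen hM.toIsBanachModule.zero_mem
        (fun h1 h2 => hM.toIsBanachModule.add_mem h1 h2)
        (fun c _ h1 => hM.toIsBanachModule.smul_mem c h1)
        hM.toIsBanachModule.isClosed hC happrox hyadj
      refine ⟨a, haM, ContinuousLinearMap.adjoint b, hstar hbM,
        ContinuousLinearMap.adjoint w, ?_⟩
      have hy2 : y = (ContinuousLinearMap.adjoint w).comp (ContinuousLinearMap.adjoint b) := by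
        have h := congrArg ContinuousLinearMap.adjoint hyw
        rwa [ContinuousLinearMap.adjoint_adjoint, ContinuousLinearMap.adjoint_comp] at h
      rw [hxy, hy2]
    · rintro ⟨A, hA, B, hB, T, rfl⟩
      constructor
      · exact Stmt0Aux.mem_B0l_gen hA _
      · rw [← ContinuousLinearMap.comp_assoc]
        exact Stmt0Aux.mem_B0r_gen hB _

end
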